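/- For all natural numbers a, b ≥ 1, gcd(a,b) = ((((−5^(ab(ab+a+b))) mod ((5^(a²b) − 1)(5^(ab²) − 1))) mod 5^(ab)) − 2, where the computation is carried out in the integers and x mod y denotes the unique representative in [0, y) for y > 0. -/

import Mathlib

open Finset

private lemma periodic_sum (f : ℕ → ℤ) (α : ℕ) (hf : ∀ j, f (j + α) = f j) (g : ℕ) :
    ∑ j ∈ Finset.range (g * α), f j = g * ∑ j ∈ Finset.range α, f j := by
  induction g with
  | zero => simp
  | succ n ih =>
    have h1 : (n + 1) * α = α + n * α := by ring
    rw [h1, Finset.sum_range_add]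
    have h2 : ∀ x, f (α + x) = f x := by
      intro x; rw [Nat.add_comm, hf]
    simp only [h2]
    rw [ih]; push_cast; ring

private lemma sum_mod_perm (q : ℤ) (g α β : ℕ) (hcop : Nat.Coprime β α) (hα : 0 < α) :
    ∑ j ∈ Finset.range α, q ^ (g * (β * j % α)) = ∑ j ∈ Finset.range α, q ^ (g * j) := by
  rcases eq_or_lt_of_le (show 1 ≤ α from hα) with h1 | h1
  · simp [← h1]
  · obtain ⟨c, -, hc⟩ := Nat.exists_mul_mod_eq_one_of_coprime hcop h1
    have hmod : β * c ≡ 1 [MOD α] := by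
      unfold Nat.ModEq; rw [hc, Nat.mod_eq_of_lt h1]
    refine Finset.sum_nbij' (fun j => β * j % α) (fun j => c * j % α) ?_ ?_ ?_ ?_ ?_
    · intro x hx; exact Finset.mem_range.mpr (Nat.mod_lt _ hα)
    · intro x hx; exact Finset.mem_range.mpr (Nat.mod_lt _ hα)
    · intro x hx
      have : c * (β * x % α) ≡ x [MOD α] := by
        calc c * (β * x % α) ≡ c * (β * x) [MOD α] := (Nat.mod_modEq _ _).mul_left c
          _ = (β * c) * x := by ring
          _ ≡ 1 * x [MOD α] := hmod.mul_right x
          _ = x := by ring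
      rw [Nat.ModEq, Nat.mod_eq_of_lt (Finset.mem_range.mp hx)] at this
      exact this
    · intro x hx
      have : β * (c * x % α) ≡ x [MOD α] := by
        calc β * (c * x % α) ≡ β * (c * x) [MOD α] := (Nat.mod_modEq _ _).mul_left β
          _ = (β * c) * x := by ring
          _ ≡ 1 * x [MOD α] := hmod.mul_right x
          _ = x := by ring
      rw [Nat.ModEq, Nat.mod_eq_of_lt (Finset.mem_range.mp hx)] at this
      exact this
    · intro x hx; rfl

private lemma heart (a b : ℕ) (ha : 0 < a) (hb : 0 < b) (q : ℤ) :
    (q ^ a - 1) ∣ (∑ j ∈ Finset.range a, q ^ (b * j))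
      - (Nat.gcd a b) * ∑ i ∈ Finset.range (a / Nat.gcd a b), q ^ (Nat.gcd a b * i) := by
  set g := Nat.gcd a b with hgdef
  have hg : 0 < g := Nat.gcd_pos_of_pos_left b ha
  set α := a / g with hαdef
  set β := b / g with hβdef
  have haα : a = g * α := (Nat.mul_div_cancel' (Nat.gcd_dvd_left a b)).symm
  have hbβ : b = g * β := (Nat.mul_div_cancel' (Nat.gcd_dvd_right a b)).symm
  have hα : 0 < α := Nat.div_pos (Nat.le_of_dvd ha (Nat.gcd_dvd_left a b)) hg
  have hcop : Nat.Coprime β α := (Nat.coprime_div_gcd_div_gcd hg).symm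
  -- step A : B ≡ S mod q^a - 1
  have hA : (q ^ a - 1) ∣ (∑ j ∈ Finset.range a, q ^ (b * j))
      - ∑ j ∈ Finset.range a, q ^ (b * j % a) := by
    rw [← Finset.sum_sub_distrib]
    refine Finset.dvd_sum fun j _ => ?_
    have h1 : b * j = a * (b * j / a) + b * j % a := (Nat.div_add_mod _ _).symm
    have h2 : q ^ (b * j) - q ^ (b * j % a) = ((q ^ a) ^ (b * j / a) - 1) * q ^ (b * j % a) := by
      rw [sub_mul, one_mul, ← pow_mul, ← pow_add, ← h1]
    rw [h2]
    exact Dvd.dvd.mul_right (by simpa using sub_dvd_pow_sub_pow (q ^ a) 1 (b * j / a)) _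
  -- step B : S = g * E
  have hexp : ∀ j, b * j % a = g * (β * j % α) := by
    intro j
    rw [haα, hbβ, mul_assoc, Nat.mul_mod_mul_left]
  have hB : (∑ j ∈ Finset.range a, q ^ (b * j % a))
      = g * ∑ i ∈ Finset.range α, q ^ (g * i) := by
    calc ∑ j ∈ Finset.range a, q ^ (b * j % a)
        = ∑ j ∈ Finset.range (g * α), q ^ (g * (β * j % α)) := by
          rw [← haα]; exact Finset.sum_congr rfl fun j _ => by rw [hexp]
      _ = g * ∑ j ∈ Finset.range α, q ^ (g * (β * j % α)) := by
          refine periodic_sum _ _ (fun j => ?_) g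
          congr 2
          rw [Nat.mul_add, Nat.add_mul_mod_self_right]
      _ = g * ∑ i ∈ Finset.range α, q ^ (g * i) := by
          rw [sum_mod_perm q g α β hcop hα]
  calc (q ^ a - 1) ∣ (∑ j ∈ Finset.range a, q ^ (b * j))
        - ∑ j ∈ Finset.range a, q ^ (b * j % a) := hA
    _ = (∑ j ∈ Finset.range a, q ^ (b * j)) - g * ∑ i ∈ Finset.range α, q ^ (g * i) := by
        rw [hB]

theorem gcd_mod_mod_base5 (a b : ℕ) (ha : 1 ≤ a) (hb : 1 ≤ b) :
    (Nat.gcd a b : ℤ) =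
      ((-(5 : ℤ) ^ (a * b * (a * b + a + b)))
          % (((5 : ℤ) ^ (a ^ 2 * b) - 1) * ((5 : ℤ) ^ (a * b ^ 2) - 1)))
        % (5 : ℤ) ^ (a * b) - 2 := by
  have ha0 : 0 < a := ha
  have hb0 : 0 < b := hb
  obtain ⟨g, hgdef⟩ : ∃ g, g = Nat.gcd a b := ⟨_, rfl⟩
  have hg : 0 < g := hgdef ▸ Nat.gcd_pos_of_pos_left b ha0
  obtain ⟨q, hqdef⟩ : ∃ q : ℤ, q = (5:ℤ) ^ (a * b) := ⟨_, rfl⟩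
  have e1 : (5:ℤ) ^ (a ^ 2 * b) = q ^ a := by
    rw [hqdef, ← pow_mul]; congr 1; ring
  have e2 : (5:ℤ) ^ (a * b ^ 2) = q ^ b := by
    rw [hqdef, ← pow_mul]; congr 1; ring
  have e3 : (5:ℤ) ^ (a * b * (a * b + a + b)) = q ^ (a * b + a + b) := by
    rw [hqdef, ← pow_mul]
  rw [e1, e2, e3, show ((Nat.gcd a b : ℤ)) = (g:ℤ) by rw [hgdef], ← hqdef]
  -- basic bounds
  have hq5 : (5:ℤ) ≤ q := hqdef ▸ le_self_pow₀ (by norm_num) (by positivity)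
  have hq1 : (1:ℤ) ≤ q := by linarith
  have hqa5 : (5:ℤ) ≤ q ^ a := le_trans hq5 (le_self_pow₀ hq1 (by omega))
  have hqb5 : (5:ℤ) ≤ q ^ b := le_trans hq5 (le_self_pow₀ hq1 (by omega))
  have hqg5 : (5:ℤ) ≤ q ^ g := le_trans hq5 (le_self_pow₀ hq1 (by omega))
  have hgz : (1:ℤ) ≤ (g:ℤ) := by exact_mod_cast hg
  have hQg : 4 * (g:ℤ) ≤ q ^ g - 1 := by
    have h1 : (1:ℤ) + (g:ℤ) * 4 ≤ 5 ^ g := by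
      have := one_add_mul_le_pow (by norm_num : (-2:ℤ) ≤ 4) g
      norm_num at this; exact this
    have h2 : (5:ℤ) ^ g ≤ q ^ g := pow_le_pow_left₀ (by norm_num) hq5 g
    linarith
  -- main objects
  obtain ⟨E, hEdef⟩ : ∃ E : ℤ, E = ∑ i ∈ Finset.range (a / g), q ^ (g * i) := ⟨_, rfl⟩
  obtain ⟨B, hBdef⟩ : ∃ B : ℤ, B = ∑ j ∈ Finset.range a, q ^ (b * j) := ⟨_, rfl⟩
  obtain ⟨L, hLdef⟩ : ∃ L : ℤ, L = (q ^ b - 1) * E := ⟨_, rfl⟩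
  obtain ⟨M, hMdef⟩ : ∃ M : ℤ, M = (q ^ a - 1) * (q ^ b - 1) := ⟨_, rfl⟩
  obtain ⟨r, hrdef⟩ : ∃ r : ℤ, r = 2 * M - q ^ (a + b) - (g:ℤ) * L := ⟨_, rfl⟩
  rw [← hMdef]
  have hME : E * (q ^ g - 1) = q ^ a - 1 := by
    have h1 := geom_sum_mul (q ^ g) (a / g)
    have h2 : (q ^ g) ^ (a / g) = q ^ a := by
      rw [← pow_mul, hgdef, Nat.mul_div_cancel' (Nat.gcd_dvd_left a b)]
    rw [h2] at h1
    rw [hEdef]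
    simpa [← pow_mul] using h1
  have hMB : B * (q ^ b - 1) = q ^ (b * a) - 1 := by
    have h1 := geom_sum_mul (q ^ b) a
    have h2 : (q ^ b) ^ a = q ^ (b * a) := by rw [← pow_mul]
    rw [h2] at h1
    rw [hBdef]
    simpa [← pow_mul] using h1
  have hheart : (q ^ a - 1) ∣ (B - (g:ℤ) * E) := by
    rw [hBdef, hEdef, hgdef]
    exact heart a b ha0 hb0 q
  have hLM : L * (q ^ g - 1) = M := by
    rw [hLdef, hMdef, mul_assoc, hME]; ring
  have hF3 : M ∣ (q ^ (a * b) - 1 - (g:ℤ) * L) := by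
    have h1 : q ^ (a * b) - 1 - (g:ℤ) * L = (B - (g:ℤ) * E) * (q ^ b - 1) := by
      rw [show a * b = b * a from Nat.mul_comm a b, hLdef]
      linear_combination -hMB
    rw [h1, hMdef]
    exact mul_dvd_mul hheart dvd_rfl
  have hF4 : M ∣ L * (q ^ (a + b) - 1) := by
    have hgab : g ∣ (a + b) := hgdef ▸ dvd_add (Nat.gcd_dvd_left a b) (Nat.gcd_dvd_right a b)
    obtain ⟨k, hk⟩ := hgab
    have h1 : (q ^ g - 1) ∣ (q ^ (a + b) - 1) := by
      have := sub_dvd_pow_sub_pow (q ^ g) 1 k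
      simpa [← pow_mul, ← hk] using this
    obtain ⟨c, hc⟩ := h1
    exact ⟨c, by rw [hc, ← hLM]; ring⟩
  have hmain : M ∣ (-q ^ (a * b + a + b) - r) := by
    have h1 : -q ^ (a * b + a + b) - r =
        (-q ^ (a + b)) * (q ^ (a * b) - 1 - (g:ℤ) * L)
          + (-(g:ℤ)) * (L * (q ^ (a + b) - 1)) + M * (-2) := by
      rw [hrdef]; ring
    rw [h1]
    exact dvd_add (dvd_add (hF3.mul_left _) (hF4.mul_left _)) (Dvd.intro _ rfl)
  -- positivity and bounds
  have hM0 : 0 < M := by rw [hMdef]; exact mul_pos (by linarith) (by linarith)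
  have hE0 : 0 < E := by nlinarith [hME]
  have hL0 : 0 < L := by rw [hLdef]; exact mul_pos (by linarith) hE0
  have hpow_ab : q ^ (a + b) = q ^ a * q ^ b := pow_add q a b
  have hr_lt : r < M := by
    rw [hrdef, hpow_ab, hMdef]
    nlinarith [mul_pos (show (0:ℤ) < (g:ℤ) by linarith) hL0]
  have hr_nonneg : 0 ≤ r := by
    have h2 : q ^ (a + b) * (q ^ g - 1) + (g:ℤ) * M ≤ 2 * M * (q ^ g - 1) := by
      rw [hpow_ab, hMdef]
      linarith [mul_nonneg (mul_nonneg (by linarith : (0:ℤ) ≤ q ^ g - 1 - 4 * g)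
          (by linarith : (0:ℤ) ≤ q ^ a - 1)) (by linarith : (0:ℤ) ≤ q ^ b - 1),
        mul_nonneg (mul_nonneg (by linarith : (0:ℤ) ≤ q ^ g - 1)
          (by linarith : (0:ℤ) ≤ q ^ a - 5)) (by linarith : (0:ℤ) ≤ q ^ b - 5),
        mul_nonneg (by linarith : (0:ℤ) ≤ q ^ g - 1)
          (by linarith : (0:ℤ) ≤ 8 * (q ^ a) + 8 * (q ^ b) - 68)]
    have h4 : (g:ℤ) * L * (q ^ g - 1) = (g:ℤ) * M := by
      rw [← hLM]; ring
    have h3 : 0 * (q ^ g - 1) ≤ r * (q ^ g - 1) := by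
      rw [hrdef]; linarith [h2, h4]
    exact le_of_mul_le_mul_right h3 (by linarith)
  -- step 1 : inner mod equals r
  have step1 : (-q ^ (a * b + a + b)) % M = r := by
    have h5 : r % M = (-q ^ (a * b + a + b)) % M := Int.modEq_iff_dvd.mpr hmain
    rw [← h5, Int.emod_eq_of_lt hr_nonneg hr_lt]
  rw [step1]
  -- step 2 : r mod q = g + 2
  have hqa_dvd : q ∣ q ^ a := dvd_pow_self q (by omega)
  have hqb_dvd : q ∣ q ^ b := dvd_pow_self q (by omega)
  have hM1d : q ∣ (M - 1) := by
    have h1 : M - 1 = q ^ a * q ^ b - q ^ a - q ^ b := by rw [hMdef]; ring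
    rw [h1]
    exact dvd_sub (dvd_sub (hqa_dvd.mul_right _) hqa_dvd) hqb_dvd
  have hE1d : q ∣ (E - 1) := by
    have hα : a / g ≠ 0 := by
      have h0 : g ∣ a := by rw [hgdef]; exact Nat.gcd_dvd_left a b
      have := Nat.div_pos (Nat.le_of_dvd ha0 h0) hg
      omega
    obtain ⟨k, hk⟩ := Nat.exists_eq_succ_of_ne_zero hα
    rw [hEdef, hk, Finset.sum_range_succ']
    simp only [Nat.mul_zero, pow_zero, add_sub_cancel_right]
    exact Finset.dvd_sum fun i _ => dvd_pow_self q (by positivity)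
  have hL1d : q ∣ (L + 1) := by
    have h1 : L + 1 = (q ^ b - 1) * (E - 1) + q ^ b := by rw [hLdef]; ring
    rw [h1]
    exact dvd_add (hE1d.mul_left _) hqb_dvd
  have hdq : q ∣ (r - ((g:ℤ) + 2)) := by
    have h1 : r - ((g:ℤ) + 2) = 2 * (M - 1) - q ^ (a + b) - (g:ℤ) * (L + 1) := by
      rw [hrdef]; ring
    rw [h1]
    exact dvd_sub (dvd_sub (hM1d.mul_left _) (dvd_pow_self q (by omega))) (hL1d.mul_left _)
  have hgq : (g:ℤ) + 2 < q := by
    have h1 : (1:ℤ) + (a * b : ℕ) * 4 ≤ 5 ^ (a * b) := by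
      have := one_add_mul_le_pow (by norm_num : (-2:ℤ) ≤ 4) (a * b)
      norm_num at this; exact_mod_cast this
    have h2 : (g:ℤ) ≤ (a * b : ℕ) := by
      rw [hgdef]
      exact_mod_cast le_trans (Nat.gcd_le_left b ha0) (Nat.le_mul_of_pos_right a hb0)
    have h3 : (1:ℕ) ≤ a * b := Nat.one_le_iff_ne_zero.mpr (by positivity)
    have h4 : (1:ℤ) ≤ (a * b : ℕ) := by exact_mod_cast h3
    rw [hqdef]
    linarith
  have step2 : r % q = (g:ℤ) + 2 := by
    have h5 : ((g:ℤ) + 2) % q = r % q := Int.modEq_iff_dvd.mpr hdq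
    rw [← h5, Int.emod_eq_of_lt (by positivity) hgq]
  rw [step2]
  ring
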